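/- Let d and k be natural numbers and A : Matrix (Fin k) (Fin d) ℤ an integer matrix admitting a right inverse over ℤ, i.e. there exists B : Matrix (Fin d) (Fin k) ℤ with A * B = 1 (in particular k ≤ d). Let T = AddCircle (1 : ℝ) and let φ : (Fin d → T) →+ (Fin k → T) be the additive group homomorphism defined by (φ x) i = ∑ j, (A i j) • (x j) (integer scalar multiplication on T). Then φ is continuous and its kernel, with the subspace topology, is isomorphic as a topological additive group to the torus Fin (d − k) → T; that is, there is an additive group isomorphism from φ.ker to Fin (d − k) → T that is also a homeomorphism. -/

import Mathlib

noncomputable section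

/-- Action of an integer matrix on a torus. -/
def mapT {m n : ℕ} (M : Matrix (Fin m) (Fin n) ℤ) (x : Fin n → AddCircle (1 : ℝ)) :
    Fin m → AddCircle (1 : ℝ) := fun i => ∑ j, M i j • x j

lemma mapT_comp {l m n : ℕ} (M : Matrix (Fin l) (Fin m) ℤ) (N : Matrix (Fin m) (Fin n) ℤ)
    (x : Fin n → AddCircle (1 : ℝ)) : mapT (M * N) x = mapT M (mapT N x) := by
  funext i
  simp only [mapT, Matrix.mul_apply, Finset.sum_smul, Finset.smul_sum, mul_smul]
  rw [Finset.sum_comm]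

lemma mapT_one {n : ℕ} (x : Fin n → AddCircle (1 : ℝ)) :
    mapT (1 : Matrix (Fin n) (Fin n) ℤ) x = x := by
  funext i
  simp [mapT, Matrix.one_apply]

lemma mapT_sub {m n : ℕ} (M N : Matrix (Fin m) (Fin n) ℤ) (x : Fin n → AddCircle (1 : ℝ)) :
    mapT (M - N) x = mapT M x - mapT N x := by
  funext i
  simp [mapT, sub_smul, Finset.sum_sub_distrib]

lemma mapT_zero_val {m n : ℕ} (M : Matrix (Fin m) (Fin n) ℤ) :
    mapT M (0 : Fin n → AddCircle (1 : ℝ)) = 0 := by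
  funext i; simp [mapT]

lemma mapT_add {m n : ℕ} (M : Matrix (Fin m) (Fin n) ℤ) (x y : Fin n → AddCircle (1 : ℝ)) :
    mapT M (x + y) = mapT M x + mapT M y := by
  funext i
  simp [mapT, smul_add, Finset.sum_add_distrib]

lemma continuous_mapT {m n : ℕ} (M : Matrix (Fin m) (Fin n) ℤ) :
    Continuous (mapT M) := by
  refine continuous_pi fun i => continuous_finset_sum _ fun j _ => ?_
  exact (continuous_zsmul (M i j)).comp (continuous_apply j)

end

/-- If the integer matrix `A : Matrix (Fin k) (Fin d) ℤ` has a right inverse over `ℤ`,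
then the induced homomorphism of tori `φ : T^d →+ T^k`, `(φ x) i = ∑ j, A i j • x j`,
is continuous and its kernel is isomorphic, as a topological additive group, to the
torus `T^(d-k)`. -/
theorem stmt5 (d k : ℕ) (A : Matrix (Fin k) (Fin d) ℤ)
    (B : Matrix (Fin d) (Fin k) ℤ) (hAB : A * B = 1)
    (φ : (Fin d → AddCircle (1 : ℝ)) →+ (Fin k → AddCircle (1 : ℝ)))
    (hφ : ∀ (x : Fin d → AddCircle (1 : ℝ)) (i : Fin k), φ x i = ∑ j, A i j • x j) :
    Continuous φ ∧
      ∃ e : φ.ker ≃+ (Fin (d - k) → AddCircle (1 : ℝ)),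
        Continuous e ∧ Continuous e.symm := by
  classical
  have hφ' : (φ : (Fin d → AddCircle (1 : ℝ)) → _) = mapT A := by
    funext x; funext i; exact hφ x i
  have contφ : Continuous φ := by rw [hφ']; exact continuous_mapT A
  refine ⟨contφ, ?_⟩
  -- Linear algebra over ℤ
  set f := Matrix.toLin' A with hf
  set g := Matrix.toLin' B with hg
  have hfg : f ∘ₗ g = LinearMap.id := by
    rw [hf, hg, ← Matrix.toLin'_mul, hAB, Matrix.toLin'_one]
  have hfgx : ∀ v, f (g v) = v := fun v => LinearMap.congr_fun hfg v
  set N := LinearMap.ker f with hN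
  have hπmem : ∀ x, ((LinearMap.id : (Fin d → ℤ) →ₗ[ℤ] (Fin d → ℤ)) - g ∘ₗ f) x ∈ N := by
    intro x
    simp only [LinearMap.sub_apply, LinearMap.id_apply, LinearMap.comp_apply,
      hN, LinearMap.mem_ker, map_sub, hfgx, sub_self]
  let π : (Fin d → ℤ) →ₗ[ℤ] N := LinearMap.codRestrict N ((LinearMap.id : (Fin d → ℤ) →ₗ[ℤ] (Fin d → ℤ)) - g ∘ₗ f) hπmem
  have hπ_apply : ∀ x, (π x : Fin d → ℤ) = x - g (f x) := fun x => rfl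
  have hπN : ∀ x : N, π (x : Fin d → ℤ) = x := by
    intro x
    apply Subtype.ext
    rw [hπ_apply]
    have hx : f (x : Fin d → ℤ) = 0 := x.2
    rw [hx, map_zero, sub_zero]
  -- the splitting equivalence
  let F1 : (Fin d → ℤ) →ₗ[ℤ] (Fin k → ℤ) × N := LinearMap.prod f π
  let G1 : ((Fin k → ℤ) × N) →ₗ[ℤ] (Fin d → ℤ) :=
    g ∘ₗ LinearMap.fst ℤ _ _ + N.subtype ∘ₗ LinearMap.snd ℤ _ _
  have hπg : ∀ v, π (g v) = 0 := by
    intro v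
    apply Subtype.ext
    rw [hπ_apply, hfgx, sub_self]
    simp
  have hFG : F1 ∘ₗ G1 = LinearMap.id := by
    apply LinearMap.ext
    rintro ⟨v, n⟩
    have hfn : f (n : Fin d → ℤ) = 0 := n.2
    refine Prod.ext ?_ ?_
    · show f (g v + (n : Fin d → ℤ)) = v
      rw [map_add, hfgx, hfn, add_zero]
    · show π (g v + (n : Fin d → ℤ)) = n
      rw [map_add, hπg, hπN, zero_add]
  have hGF : G1 ∘ₗ F1 = LinearMap.id := by
    apply LinearMap.ext
    intro x
    show g (f x) + ((π x : N) : Fin d → ℤ) = x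
    rw [hπ_apply]
    abel
  let eq1 : (Fin d → ℤ) ≃ₗ[ℤ] (Fin k → ℤ) × N := LinearEquiv.ofLinear F1 G1 hFG hGF
  have hr : Module.finrank ℤ N = d - k := by
    have h1 : Module.finrank ℤ (Fin d → ℤ) = Module.finrank ℤ ((Fin k → ℤ) × N) :=
      eq1.finrank_eq
    rw [Module.finrank_fin_fun, Module.finrank_prod, Module.finrank_fin_fun] at h1
    omega
  let b : Module.Basis (Fin (d - k)) ℤ N := (Module.finBasis ℤ N).reindex (finCongr hr)
  let Cl : (Fin (d - k) → ℤ) →ₗ[ℤ] (Fin d → ℤ) := N.subtype ∘ₗ b.equivFun.symm.toLinearMap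
  let El : (Fin d → ℤ) →ₗ[ℤ] (Fin (d - k) → ℤ) := b.equivFun.toLinearMap ∘ₗ π
  let Cm := LinearMap.toMatrix' Cl
  let Em := LinearMap.toMatrix' El
  have hA : A = LinearMap.toMatrix' f := (LinearMap.toMatrix'_toLin' A).symm
  have hB : B = LinearMap.toMatrix' g := (LinearMap.toMatrix'_toLin' B).symm
  have hAC : A * Cm = 0 := by
    have h0 : f ∘ₗ Cl = 0 := by
      apply LinearMap.ext
      intro v
      have : (Cl v : Fin d → ℤ) ∈ N := (b.equivFun.symm v).2
      simpa [hN] using this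
    show A * LinearMap.toMatrix' Cl = 0
    rw [hA, ← LinearMap.toMatrix'_comp, h0, map_zero]
  have hEC : Em * Cm = 1 := by
    have h1 : El ∘ₗ Cl = LinearMap.id := by
      apply LinearMap.ext
      intro v
      show b.equivFun (π ((b.equivFun.symm v : N) : Fin d → ℤ)) = v
      rw [hπN, LinearEquiv.apply_symm_apply]
    show LinearMap.toMatrix' El * LinearMap.toMatrix' Cl = 1
    rw [← LinearMap.toMatrix'_comp, h1, LinearMap.toMatrix'_id]
  have hCE : Cm * Em = 1 - B * A := by
    have h2 : Cl ∘ₗ El = LinearMap.id - g ∘ₗ f := by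
      apply LinearMap.ext
      intro x
      show ((b.equivFun.symm (b.equivFun (π x)) : N) : Fin d → ℤ) = _
      rw [LinearEquiv.symm_apply_apply, hπ_apply]
      rfl
    show LinearMap.toMatrix' Cl * LinearMap.toMatrix' El = 1 - B * A
    rw [← LinearMap.toMatrix'_comp, h2, map_sub, LinearMap.toMatrix'_id,
      LinearMap.toMatrix'_comp, ← hA, ← hB]
  -- build the equivalence on the torus
  have hker0 : ∀ x : φ.ker, mapT A (x : Fin d → AddCircle (1 : ℝ)) = 0 := by
    intro x
    rw [← congrFun hφ' x.1]
    exact x.2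
  let e : φ.ker ≃+ (Fin (d - k) → AddCircle (1 : ℝ)) :=
    { toFun := fun x => mapT Em (x : Fin d → AddCircle (1 : ℝ))
      invFun := fun y => ⟨mapT Cm y, by
        have : φ (mapT Cm y) = 0 := by
          rw [congrFun hφ' (mapT Cm y), ← mapT_comp, hAC]
          funext i; simp [mapT]
        exact this⟩
      left_inv := by
        intro x
        apply Subtype.ext
        show mapT Cm (mapT Em (x : Fin d → AddCircle (1 : ℝ))) = _
        rw [← mapT_comp, hCE, mapT_sub, mapT_one, mapT_comp, hker0 x, mapT_zero_val, sub_zero]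
      right_inv := by
        intro y
        show mapT Em (mapT Cm y) = y
        rw [← mapT_comp, hEC, mapT_one]
      map_add' := by
        intro x y
        show mapT Em ((x : Fin d → AddCircle (1 : ℝ)) + y) = _
        rw [mapT_add] }
  refine ⟨e, ?_, ?_⟩
  · exact (continuous_mapT Em).comp continuous_subtype_val
  · exact Continuous.subtype_mk (continuous_mapT Cm) _
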